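/- Let F be an algebraically closed field of characteristic 2 and ω ∈ F with ω² + ω + 1 = 0. Then (a,b,c) ∈ F³ satisfies the two equations 1 + a + b + c = 0 and 1 + ab + bc + ca = 0 if and only if there exists t ∈ F such that (a,b,c) = (1+t, 1+ωt, 1+ω²t) or (a,b,c) = (1+t, 1+ω²t, 1+ωt). In other words, the affine variety defined by these two equations is the union of two lines through (1,1,1). -/
import Mathlib


/-- Let `F` be an algebraically closed field of characteristic 2 and `ω ∈ F` with
`ω² + ω + 1 = 0`.  Then `(a,b,c)` satisfies `1 + a + b + c = 0` and
`1 + ab + bc + ca = 0` if and only if `(a,b,c) = (1+t, 1+ωt, 1+ω²t)` or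
`(a,b,c) = (1+t, 1+ω²t, 1+ωt)` for some `t ∈ F`: the variety is the union of two
lines through `(1,1,1)`. -/
theorem statement_18 (F : Type*) [Field F] [IsAlgClosed F] [CharP F 2]
    (ω : F) (hω : ω ^ 2 + ω + 1 = 0) (a b c : F) :
    (1 + a + b + c = 0 ∧ 1 + a * b + b * c + c * a = 0) ↔
      ∃ t : F, (a = 1 + t ∧ b = 1 + ω * t ∧ c = 1 + ω ^ 2 * t) ∨
        (a = 1 + t ∧ b = 1 + ω ^ 2 * t ∧ c = 1 + ω * t) := by
  have htwo : (2 : F) = 0 := by exact_mod_cast CharP.cast_eq_zero F 2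
  constructor
  · rintro ⟨h1, h2⟩
    have key : (b + 1 + ω * (a + 1)) * (b + 1 + ω ^ 2 * (a + 1)) = 0 := by
      linear_combination (a + b) * h1 - h2 + (1 - a * b) * htwo +
        ((a + 1) * (b + 1) + (ω - 1) * (a + 1) ^ 2) * hω
    refine ⟨a + 1, ?_⟩
    rcases mul_eq_zero.mp key with h | h
    · exact Or.inl ⟨by linear_combination -htwo,
        by linear_combination h + (-1 - ω * (a + 1)) * htwo,
        by linear_combination h1 - h + ω * (a + 1) * htwo - (a + 1) * hω⟩
    · exact Or.inr ⟨by linear_combination -htwo,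
        by linear_combination h + (-1 - ω ^ 2 * (a + 1)) * htwo,
        by linear_combination h1 - h + (a + 1) * hω - (1 + ω) * (a + 1) * htwo⟩
  · rintro ⟨t, ⟨ha, hb, hc⟩ | ⟨ha, hb, hc⟩⟩ <;> subst ha hb hc <;>
      exact ⟨by linear_combination 2 * htwo + t * hω,
        by linear_combination 2 * htwo + (2 * t + ω * t ^ 2) * hω⟩
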